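/- Let Ind and V be finite sets with |Ind| = u ≥ 1 and |V| = v ≥ 2, let X = V^Ind be the vertex set of the Hamming graph H(u,v), and let ε > 0. Define K : X → X → ℝ by K(x,x') = c · e^{−ε·h(x,x')}, where h(x,x') is the Hamming distance (number of coordinates in which x and x' differ) and c = (e^ε / (v − 1 + e^ε))^u. Then K is a channel matrix from X to X, K satisfies ε-differential privacy with respect to the Hamming graph, and its min-entropy leakage under the uniform input distribution equals the optimal bound: log₂(Σ_{x'∈X} max_{x∈X} K(x,x')) = u · log₂(v·e^ε / (v − 1 + e^ε)). -/

import Mathlib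

open Finset

/-- The Hamming graph on `Ind → V`: two tuples are adjacent iff they differ in
exactly one coordinate. -/
def hammingGraph (Ind V : Type*) [Fintype Ind] [DecidableEq V] : SimpleGraph (Ind → V) where
  Adj x y := hammingDist x y = 1
  symm := ⟨fun x y h => (hammingDist_comm y x).trans h⟩
  loopless := ⟨fun x h => by simp [hammingDist_self] at h⟩

/-- `ε`-differential privacy of a channel matrix with respect to a graph. -/
def SatisfiesDP {A B : Type*} (G : SimpleGraph A) (ε : ℝ) (M : A → B → ℝ) : Prop :=
  ∀ (b : B) (a a' : A), G.Adj a a' → M a b ≤ Real.exp ε * M a' b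

theorem stmt7 {Ind V : Type*} [Fintype Ind] [DecidableEq Ind] [Fintype V] [DecidableEq V]
    [Nonempty V]
    (u v : ℕ) (hu : Fintype.card Ind = u) (hu1 : 1 ≤ u)
    (hv : Fintype.card V = v) (hv2 : 2 ≤ v)
    (ε : ℝ) (hε : 0 < ε)
    (c : ℝ) (hc : c = (Real.exp ε / ((v : ℝ) - 1 + Real.exp ε)) ^ u)
    (K : (Ind → V) → (Ind → V) → ℝ)
    (hK : ∀ x x' : Ind → V, K x x' = c * Real.exp (-(ε * hammingDist x x'))) :
    (∀ x x' : Ind → V, 0 ≤ K x x') ∧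
    (∀ x : Ind → V, ∑ x', K x x' = 1) ∧
    SatisfiesDP (hammingGraph Ind V) ε K ∧
    Real.logb 2 (∑ x', Finset.univ.sup' Finset.univ_nonempty (fun x => K x x'))
      = (u : ℝ) * Real.logb 2 ((v : ℝ) * Real.exp ε / ((v : ℝ) - 1 + Real.exp ε)) := by
  have hv1 : (1:ℝ) ≤ (v:ℝ) := by exact_mod_cast (by omega : 1 ≤ v)
  have hD : (0:ℝ) < (v:ℝ) - 1 + Real.exp ε := by nlinarith [Real.exp_pos ε]
  have hc0 : 0 < c := by rw [hc]; positivity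
  -- row sum of exponentials
  have hrow : ∀ x : Ind → V, ∑ x' : Ind → V, Real.exp (-(ε * hammingDist x x')) =
      (1 + ((v:ℝ)-1) * Real.exp (-ε)) ^ u := by
    intro x
    have h1 : ∀ x' : Ind → V, Real.exp (-(ε * hammingDist x x')) =
        ∏ i, (if x i = x' i then (1:ℝ) else Real.exp (-ε)) := by
      intro x'
      have hh : (hammingDist x x' : ℝ) = ∑ i, (if x i = x' i then (0:ℝ) else 1) := by
        rw [hammingDist, Finset.card_filter]
        push_cast
        exact Finset.sum_congr rfl fun i _ => by by_cases h : x i = x' i <;> simp [h]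
      rw [hh, Finset.mul_sum, ← Finset.sum_neg_distrib, Real.exp_sum]
      refine Finset.prod_congr rfl fun i _ => ?_
      by_cases h : x i = x' i <;> simp [h]
    simp_rw [h1]
    rw [← Fintype.prod_sum (fun i y => if x i = y then (1:ℝ) else Real.exp (-ε))]
    have h2 : ∀ i : Ind, ∑ y : V, (if x i = y then (1:ℝ) else Real.exp (-ε)) =
        1 + ((v:ℝ)-1) * Real.exp (-ε) := by
      intro i
      have : ∀ y : V, (if x i = y then (1:ℝ) else Real.exp (-ε)) =
          (if x i = y then (1:ℝ) - Real.exp (-ε) else 0) + Real.exp (-ε) := by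
        intro y; by_cases h : x i = y <;> simp [h]
      simp_rw [this]
      rw [Finset.sum_add_distrib, Finset.sum_ite_eq, Finset.sum_const]
      simp [hv]
      ring
    rw [Finset.prod_congr rfl fun i _ => h2 i, Finset.prod_const, Finset.card_univ, hu]
  have hbase : 1 + ((v:ℝ)-1) * Real.exp (-ε) = ((v:ℝ) - 1 + Real.exp ε) / Real.exp ε := by
    rw [Real.exp_neg]
    field_simp
    ring
  -- nonnegativity
  have hnn : ∀ x x' : Ind → V, 0 ≤ K x x' := by
    intro x x'; rw [hK]; positivity
  refine ⟨hnn, ?_, ?_, ?_⟩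
  · intro x
    simp_rw [hK]
    rw [← Finset.mul_sum, hrow, hbase, hc, ← mul_pow, div_mul_div_comm,
      mul_comm (Real.exp ε), div_self (by positivity), one_pow]
  · intro b a a' hadj
    rw [hK, hK]
    have htri : (hammingDist a b : ℝ) + 1 ≥ (hammingDist a' b : ℝ) := by
      have := hammingDist_triangle a' a b
      have hab : hammingDist a' a = 1 := by
        have : hammingDist a b = 1 → True := fun _ => trivial
        rw [hammingDist_comm]; exact hadj
      rw [hab] at this
      exact_mod_cast by omega
    rw [mul_comm (Real.exp ε), mul_assoc, ← Real.exp_add]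
    apply mul_le_mul_of_nonneg_left _ hc0.le
    apply Real.exp_le_exp.mpr
    nlinarith
  · have hsup : ∀ x' : Ind → V,
        (Finset.univ.sup' Finset.univ_nonempty (fun x => K x x')) = c := by
      intro x'
      apply le_antisymm
      · apply Finset.sup'_le
        intro x _
        rw [hK]
        calc c * Real.exp (-(ε * hammingDist x x')) ≤ c * 1 := by
              apply mul_le_mul_of_nonneg_left _ hc0.le
              exact Real.exp_le_one_iff.mpr
                (neg_nonpos.mpr (mul_nonneg hε.le (Nat.cast_nonneg _)))
          _ = c := mul_one c
      · have := Finset.le_sup' (fun x => K x x') (Finset.mem_univ x')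
        rwa [hK, hammingDist_self, Nat.cast_zero, mul_zero, neg_zero, Real.exp_zero,
          mul_one] at this
    simp_rw [hsup]
    rw [Finset.sum_const, Finset.card_univ, Fintype.card_fun, hu, hv, nsmul_eq_mul, hc]
    push_cast
    rw [← mul_pow, Real.logb_pow]
    congr 2
    ring
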